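/- Let X and Y be Polish spaces and c : X × Y → ℝ a continuous non-negative cost function. Let γ be an optimal coupling between probability measures μ on X and ν on Y with finite transport cost ∫ c dγ < ∞. Let ω be a probability measure on X × Y that is absolutely continuous with respect to γ and has finite transport cost ∫ c dω < ∞. Then ω is an optimal coupling between its marginals η := (proj_X)_# ω and ζ := (proj_Y)_# ω. -/

import Mathlib

open MeasureTheory ProbabilityTheory Set
open scoped ENNReal

noncomputable section

/-- The transport cost of a plan `γ` for the cost function `c`. -/
def transportCost {X Y : Type*} [MeasurableSpace X] [MeasurableSpace Y]
    (c : X × Y → ℝ) (γ : Measure (X × Y)) : ℝ≥0∞ :=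
  ∫⁻ p, ENNReal.ofReal (c p) ∂γ

/-- `γ` is a coupling of `μ` and `ν`: its marginals are `μ` and `ν`. -/
def IsCoupling {X Y : Type*} [MeasurableSpace X] [MeasurableSpace Y]
    (γ : Measure (X × Y)) (μ : Measure X) (ν : Measure Y) : Prop :=
  γ.map Prod.fst = μ ∧ γ.map Prod.snd = ν

/-- `γ` is an optimal coupling of `μ` and `ν` for the cost `c`: it is a coupling and
attains the infimum of the transport cost over all couplings of `μ` and `ν`. -/
def IsOptimalCoupling {X Y : Type*} [MeasurableSpace X] [MeasurableSpace Y]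
    (c : X × Y → ℝ) (γ : Measure (X × Y)) (μ : Measure X) (ν : Measure Y) : Prop :=
  IsCoupling γ μ ν ∧
    ∀ γ' : Measure (X × Y), IsCoupling γ' μ ν → transportCost c γ ≤ transportCost c γ'

namespace Stmt0Aux

open Filter Topology

/-! ### Topological support of a measure -/

section Support

variable {Z : Type*} [TopologicalSpace Z] [MeasurableSpace Z]

/-- The topological support of a measure. -/
def msupp (m : Measure Z) : Set Z := {z | ∀ U : Set Z, IsOpen U → z ∈ U → 0 < m U}

lemma msupp_compl_null [SecondCountableTopology Z] [OpensMeasurableSpace Z] (m : Measure Z) :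
    m (msupp m)ᶜ = 0 := by
  obtain ⟨B, hBc, -, hBb⟩ := TopologicalSpace.exists_countable_basis Z
  have hsub : (msupp m)ᶜ ⊆ ⋃₀ {b | b ∈ B ∧ m b = 0} := by
    intro z hz
    simp only [mem_compl_iff, msupp, mem_setOf_eq, not_forall] at hz
    obtain ⟨U, hUo, hzU, hU0⟩ := hz
    have hU0' : m U = 0 := le_zero_iff.mp (not_lt.mp hU0)
    obtain ⟨b, hbB, hzb, hbU⟩ := hBb.exists_subset_of_mem_open hzU hUo
    exact ⟨b, ⟨hbB, measure_mono_null hbU hU0'⟩, hzb⟩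
  refine measure_mono_null hsub ?_
  apply (measure_sUnion_null_iff (hBc.mono (fun b hb => hb.1))).mpr
  exact fun t ht => ht.2

end Support

/-! ### Helper lemmas -/

lemma withDensity_finset_sum {α : Type*} [MeasurableSpace α] (μ : Measure α) {ι : Type*}
    (s : Finset ι) (f : ι → α → ℝ≥0∞) (hf : ∀ i, Measurable (f i)) :
    μ.withDensity (fun a => ∑ i ∈ s, f i a) = ∑ i ∈ s, μ.withDensity (f i) := by
  classical
  induction s using Finset.induction with
  | empty => simp [withDensity_zero]
  | @insert j s hj ih =>
      rw [Finset.sum_insert hj]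
      have : (fun a => ∑ i ∈ insert j s, f i a) = f j + fun a => ∑ i ∈ s, f i a := by
        funext a; simp [Finset.sum_insert hj]
      rw [this, withDensity_add_left (hf j), ih]

lemma map_finset_sum {α β : Type*} [MeasurableSpace α] [MeasurableSpace β] {g : α → β}
    (hg : Measurable g) {ι : Type*} (s : Finset ι) (ρ : ι → Measure α) :
    (∑ i ∈ s, ρ i).map g = ∑ i ∈ s, (ρ i).map g := by
  classical
  induction s using Finset.induction with
  | empty => simp
  | @insert j s hj ih =>
      rw [Finset.sum_insert hj, Finset.sum_insert hj, Measure.map_add _ _ hg, ih]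

lemma ofReal_sum_le {ι : Type*} (s : Finset ι) (f : ι → ℝ) :
    ENNReal.ofReal (∑ i ∈ s, f i) ≤ ∑ i ∈ s, ENNReal.ofReal (f i) := by
  classical
  induction s using Finset.induction with
  | empty => simp
  | @insert j s hj ih =>
      rw [Finset.sum_insert hj, Finset.sum_insert hj]
      exact le_trans ENNReal.ofReal_add_le (by gcongr)

lemma ereal_le_coe_of_forall {a : EReal} {r : ℝ}
    (h : ∀ ε : ℝ, 0 < ε → a ≤ ((r + ε : ℝ) : EReal)) : a ≤ (r : EReal) := by
  induction a using EReal.rec with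
  | bot => exact bot_le
  | coe s =>
      rw [EReal.coe_le_coe_iff]
      by_contra hs
      push_neg at hs
      have := h ((s - r) / 2) (by linarith)
      rw [EReal.coe_le_coe_iff] at this
      linarith
  | top =>
      have := h 1 one_pos
      exact absurd this (not_le.mpr (EReal.coe_lt_top _))

/-- clamping to `[-n, n]` -/
def clamp (n : ℝ) (t : ℝ) : ℝ := max (-n) (min n t)

lemma clamp_le (n t : ℝ) (hn : 0 ≤ n) : clamp n t ≤ n :=
  max_le (by linarith) (min_le_left _ _)

lemma neg_le_clamp (n t : ℝ) : -n ≤ clamp n t := le_max_left _ _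

lemma clamp_eq_self {n t : ℝ} (h1 : -n ≤ t) (h2 : t ≤ n) : clamp n t = t := by
  unfold clamp
  rw [min_eq_right h2, max_eq_right h1]

lemma clamp_add_le {A B cv n : ℝ} (hn : 0 ≤ n) (h : A + B ≤ cv) (hc : 0 ≤ cv) :
    clamp n A + clamp n B ≤ cv := by
  rcases le_or_gt A (-n) with hA | hA
  · have h1 : clamp n A = -n := by
      unfold clamp
      rw [min_eq_right (by linarith), max_eq_left (by linarith)]
    have h2 : clamp n B ≤ n := clamp_le n B hn
    linarith
  · rcases le_or_gt B (-n) with hB | hB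
    · have h1 : clamp n B = -n := by
        unfold clamp
        rw [min_eq_right (by linarith), max_eq_left (by linarith)]
      have h2 : clamp n A ≤ n := clamp_le n A hn
      linarith
    · have h1 : clamp n A ≤ A := max_le (by linarith) (min_le_right _ _)
      have h2 : clamp n B ≤ B := max_le (by linarith) (min_le_right _ _)
      linarith

lemma clamp_add_nonneg {A B cv n : ℝ} (hn : 0 ≤ n) (h : A + B = cv) (hc : 0 ≤ cv) :
    0 ≤ clamp n A + clamp n B := by
  rcases le_or_gt A (-n) with hA | hA
  · -- then B = cv - A ≥ cv + n ≥ n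
    have h1 : clamp n B = n := by
      unfold clamp
      rw [min_eq_left (by linarith), max_eq_right (by linarith)]
    have h2 : -n ≤ clamp n A := neg_le_clamp n A
    linarith
  · rcases le_or_gt n A with hA2 | hA2
    · have h1 : clamp n A = n := by
        unfold clamp
        rw [min_eq_left (by linarith), max_eq_right (by linarith)]
      have h2 : -n ≤ clamp n B := neg_le_clamp n B
      linarith
    · have h1 : clamp n A = A := clamp_eq_self (by linarith) (by linarith)
      rcases le_or_gt B (-n) with hB | hB
      · linarith
      · rcases le_or_gt n B with hB2 | hB2
        · have h2 : clamp n B = n := by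
            unfold clamp
            rw [min_eq_left (by linarith), max_eq_right (by linarith)]
          linarith
        · have h2 : clamp n B = B := clamp_eq_self (by linarith) (by linarith)
          linarith


/-! ### Step 1: the support of an optimal plan is cyclically monotone -/

section CMono

variable {X Y : Type*}
    [MeasurableSpace X] [TopologicalSpace X] [PolishSpace X] [BorelSpace X]
    [MeasurableSpace Y] [TopologicalSpace Y] [PolishSpace Y] [BorelSpace Y]

lemma coupling_prob {γ : Measure (X × Y)} {μ : Measure X} {ν : Measure Y}
    [IsProbabilityMeasure μ] (h : IsCoupling γ μ ν) : IsProbabilityMeasure γ := by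
  constructor
  have h1 : γ.map Prod.fst Set.univ = μ Set.univ := by rw [h.1]
  rw [Measure.map_apply measurable_fst MeasurableSet.univ, Set.preimage_univ] at h1
  rw [h1, measure_univ]

lemma optimal_support_cmono (c : X × Y → ℝ) (hc_cont : Continuous c)
    (hc_nonneg : ∀ p, 0 ≤ c p)
    (μ : Measure X) (ν : Measure Y) [IsProbabilityMeasure μ] [IsProbabilityMeasure ν]
    (γ : Measure (X × Y)) (hγ : IsOptimalCoupling c γ μ ν)
    (hγfin : transportCost c γ < ⊤)
    (N : ℕ) [NeZero N] (q : Fin N → X × Y) (hq : ∀ i, q i ∈ msupp γ) :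
    ∑ i, c (q i) ≤ ∑ i, c ((q (i + 1)).1, (q i).2) := by
  have hN : 0 < N := Nat.pos_of_ne_zero (NeZero.ne N)
  haveI hγp : IsProbabilityMeasure γ := coupling_prob hγ.1
  by_contra hcon
  push_neg at hcon
  set δ : ℝ := ∑ i, c (q i) - ∑ i, c ((q (i + 1)).1, (q i).2) with hδdef
  have hδ : 0 < δ := sub_pos.mpr hcon
  set δ' : ℝ := δ / (4 * N) with hδ'def
  have hδ' : 0 < δ' := by positivity
  -- neighborhoods with controlled oscillation of c
  have key : ∀ p : X × Y, ∃ (U : Set X) (V : Set Y), IsOpen U ∧ IsOpen V ∧ p.1 ∈ U ∧ p.2 ∈ V ∧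
      ∀ a ∈ U, ∀ b ∈ V, |c (a, b) - c p| ≤ δ' := by
    intro p
    have hopen : IsOpen {z : X × Y | |c z - c p| < δ'} :=
      isOpen_lt ((hc_cont.sub continuous_const).abs) continuous_const
    have h1 : {z : X × Y | |c z - c p| < δ'} ∈ nhds p :=
      hopen.mem_nhds (by simpa using hδ')
    rw [mem_nhds_prod_iff'] at h1
    obtain ⟨U, V, hUo, hpU, hVo, hpV, hUV⟩ := h1
    refine ⟨U, V, hUo, hVo, hpU, hpV, fun a ha b hb => ?_⟩
    have := hUV (Set.mk_mem_prod ha hb)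
    exact le_of_lt this
  choose U1 V1 hU1o hV1o hm1U hm1V hcl1 using fun i => key (q i)
  choose U2 V2 hU2o hV2o hm2U hm2V hcl2 using fun i => key ((q (i + 1)).1, (q i).2)
  set U : Fin N → Set X := fun i => U1 i ∩ U2 (i - 1) with hUdef
  set V : Fin N → Set Y := fun i => V1 i ∩ V2 i with hVdef
  have hUo : ∀ i, IsOpen (U i) := fun i => (hU1o i).inter (hU2o _)
  have hVo : ∀ i, IsOpen (V i) := fun i => (hV1o i).inter (hV2o _)
  have hqU : ∀ i, (q i).1 ∈ U i := by
    intro i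
    refine ⟨hm1U i, ?_⟩
    have := hm2U (i - 1)
    simpa [sub_add_cancel] using this
  have hqV : ∀ i, (q i).2 ∈ V i := fun i => ⟨hm1V i, hm2V i⟩
  set R : Fin N → Set (X × Y) := fun i => U i ×ˢ V i with hRdef
  have hRo : ∀ i, IsOpen (R i) := fun i => (hUo i).prod (hVo i)
  have hRm : ∀ i, MeasurableSet (R i) := fun i => (hRo i).measurableSet
  set m : Fin N → ℝ≥0∞ := fun i => γ (R i) with hmdef
  have hm0 : ∀ i, 0 < m i := fun i => hq i (R i) (hRo i) ⟨hqU i, hqV i⟩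
  have hmtop : ∀ i, m i ≠ ∞ := fun i => (measure_lt_top γ _).ne
  -- bounds for c on the rectangles
  have hlow : ∀ i, ∀ p ∈ R i, c (q i) - δ' ≤ c p := by
    intro i p hp
    have h1 := hcl1 i p.1 hp.1.1 p.2 hp.2.1
    rw [Prod.mk.eta] at h1
    have := (abs_le.mp h1).1
    linarith
  have hup : ∀ i, ∀ a ∈ U (i + 1), ∀ b ∈ V i, c (a, b) ≤ c ((q (i + 1)).1, (q i).2) + δ' := by
    intro i a ha b hb
    have ha2 : a ∈ U2 i := by
      have := ha.2
      simpa [add_sub_cancel_right] using this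
    have h1 := hcl2 i a ha2 b hb.2
    have := (abs_le.mp h1).2
    linarith
  -- the common mass to move
  obtain ⟨i₀, -, hi₀⟩ := Finset.exists_min_image Finset.univ m ⟨0, Finset.mem_univ _⟩
  set ε : ℝ≥0∞ := m i₀ / N with hεdef
  have hNne : (N : ℝ≥0∞) ≠ 0 := Nat.cast_ne_zero.mpr hN.ne'
  have hNtop : (N : ℝ≥0∞) ≠ ∞ := ENNReal.natCast_ne_top N
  have hε0 : ε ≠ 0 := by
    simp only [hεdef, ne_eq, ENNReal.div_eq_zero_iff, not_or]
    exact ⟨(hm0 i₀).ne', hNtop⟩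
  have hεtop : ε ≠ ∞ := by
    simp only [hεdef]
    exact (ENNReal.div_lt_top (hmtop i₀) hNne).ne
  have hεm : ∀ i, ε * (m i)⁻¹ ≤ (N : ℝ≥0∞)⁻¹ := by
    intro i
    rw [hεdef, div_eq_mul_inv]
    calc m i₀ * (N : ℝ≥0∞)⁻¹ * (m i)⁻¹ = m i₀ * (m i)⁻¹ * (N : ℝ≥0∞)⁻¹ := by ring
    _ ≤ m i * (m i)⁻¹ * (N : ℝ≥0∞)⁻¹ := by gcongr; exact hi₀ i (Finset.mem_univ i)
    _ = 1 * (N : ℝ≥0∞)⁻¹ := by rw [ENNReal.mul_inv_cancel (hm0 i).ne' (hmtop i)]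
    _ = (N : ℝ≥0∞)⁻¹ := one_mul _
  -- densities
  set E : X × Y → ℝ≥0∞ := fun p => ∑ i, (R i).indicator (fun _ => ε * (m i)⁻¹) p with hEdef
  have hEmeas : Measurable E :=
    Finset.measurable_sum _ fun i _ => measurable_const.indicator (hRm i)
  have hE1 : ∀ p, E p ≤ 1 := by
    intro p
    have hterm : ∀ i : Fin N, (R i).indicator (fun _ => ε * (m i)⁻¹) p ≤ (N : ℝ≥0∞)⁻¹ := by
      intro i
      classical
      rw [Set.indicator_apply]
      split
      · exact hεm i
      · exact zero_le
    calc E p ≤ ∑ _i : Fin N, (N : ℝ≥0∞)⁻¹ := Finset.sum_le_sum fun i _ => hterm i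
    _ = (N : ℝ≥0∞) * (N : ℝ≥0∞)⁻¹ := by
        simp [Finset.sum_const, Finset.card_univ, mul_comm]
    _ = 1 := ENNReal.mul_inv_cancel hNne hNtop
  set W : Measure (X × Y) := γ.withDensity (fun p => 1 - E p) with hWdef
  set σ : Fin N → Measure (X × Y) := fun i => (ε * (m i)⁻¹) • γ.restrict (R i) with hσdef
  have hsplit : γ = W + ∑ i, σ i := by
    have h1 : γ.withDensity E = ∑ i, σ i := by
      rw [hEdef, withDensity_finset_sum γ Finset.univ _
        (fun i => measurable_const.indicator (hRm i))]
      refine Finset.sum_congr rfl fun i _ => ?_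
      rw [withDensity_indicator (hRm i)]
      rw [show (fun (_ : X × Y) => ε * (m i)⁻¹) = (ε * (m i)⁻¹) • (1 : (X × Y) → ℝ≥0∞) by
        funext p; simp]
      rw [withDensity_smul _ measurable_one, withDensity_one]
    have h2 : W + γ.withDensity E = γ := by
      rw [hWdef, ← withDensity_add_left (show Measurable (fun p => 1 - E p) from measurable_const.sub hEmeas) E]
      have : (fun p => (1 - E p) + E p) = (1 : (X × Y) → ℝ≥0∞) := by
        funext p
        simp only [Pi.one_apply]
        exact tsub_add_cancel_of_le (hE1 p)
      rw [show ((fun p => 1 - E p) + E) = (fun p => (1 - E p) + E p) from rfl, this,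
        withDensity_one]
    rw [← h1, h2]
  -- marginals of the pieces
  set A : Fin N → Measure X := fun i => (γ.restrict (R i)).map Prod.fst with hAdef
  set B : Fin N → Measure Y := fun i => (γ.restrict (R i)).map Prod.snd with hBdef
  have hA_univ : ∀ i, A i Set.univ = m i := by
    intro i
    rw [hAdef]
    rw [Measure.map_apply measurable_fst MeasurableSet.univ, Set.preimage_univ,
      Measure.restrict_apply_univ]
  have hB_univ : ∀ i, B i Set.univ = m i := by
    intro i
    rw [hBdef]
    rw [Measure.map_apply measurable_snd MeasurableSet.univ, Set.preimage_univ,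
      Measure.restrict_apply_univ]
  have hAprob : ∀ i, IsProbabilityMeasure ((m i)⁻¹ • A i) := by
    intro i
    constructor
    rw [Measure.smul_apply, hA_univ i, smul_eq_mul,
      ENNReal.inv_mul_cancel (hm0 i).ne' (hmtop i)]
  have hBprob : ∀ i, IsProbabilityMeasure ((m i)⁻¹ • B i) := by
    intro i
    constructor
    rw [Measure.smul_apply, hB_univ i, smul_eq_mul,
      ENNReal.inv_mul_cancel (hm0 i).ne' (hmtop i)]
  set τ : Fin N → Measure (X × Y) :=
    fun i => ε • (((m (i + 1))⁻¹ • A (i + 1)).prod ((m i)⁻¹ • B i)) with hτdef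
  set γ' : Measure (X × Y) := W + ∑ i, τ i with hγ'def
  -- γ' is a coupling of μ and ν
  have hτfst : ∀ i, (τ i).map Prod.fst = (ε * (m (i + 1))⁻¹) • A (i + 1) := by
    intro i
    haveI := hAprob (i + 1)
    haveI := hBprob i
    rw [hτdef]
    rw [Measure.map_smul, Measure.map_fst_prod, measure_univ, one_smul, smul_smul]
  have hτsnd : ∀ i, (τ i).map Prod.snd = (ε * (m i)⁻¹) • B i := by
    intro i
    haveI := hAprob (i + 1)
    haveI := hBprob i
    rw [hτdef]
    rw [Measure.map_smul, Measure.map_snd_prod, measure_univ, one_smul, smul_smul]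
  have hσfst : ∀ i, (σ i).map Prod.fst = (ε * (m i)⁻¹) • A i := by
    intro i; rw [hσdef]; exact Measure.map_smul _ _ _
  have hσsnd : ∀ i, (σ i).map Prod.snd = (ε * (m i)⁻¹) • B i := by
    intro i; rw [hσdef]; exact Measure.map_smul _ _ _
  have hτσfst : ∑ i, (τ i).map Prod.fst = ∑ i, (σ i).map Prod.fst := by
    rw [Finset.sum_congr rfl fun i _ => hτfst i, Finset.sum_congr rfl fun i _ => hσfst i]
    exact (Fintype.sum_equiv (Equiv.addRight (1 : Fin N))
      (fun i => (ε * (m (i + 1))⁻¹) • A (i + 1)) (fun j => (ε * (m j)⁻¹) • A j)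
      (fun i => rfl)).symm ▸ rfl
  have hτσsnd : ∑ i, (τ i).map Prod.snd = ∑ i, (σ i).map Prod.snd := by
    rw [Finset.sum_congr rfl fun i _ => hτsnd i, Finset.sum_congr rfl fun i _ => hσsnd i]
  have hcoupling : IsCoupling γ' μ ν := by
    constructor
    · calc γ'.map Prod.fst = W.map Prod.fst + ∑ i, (τ i).map Prod.fst := by
            rw [hγ'def, Measure.map_add _ _ measurable_fst, map_finset_sum measurable_fst]
      _ = W.map Prod.fst + ∑ i, (σ i).map Prod.fst := by rw [hτσfst]
      _ = (W + ∑ i, σ i).map Prod.fst := by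
            rw [Measure.map_add _ _ measurable_fst, map_finset_sum measurable_fst]
      _ = γ.map Prod.fst := by rw [← hsplit]
      _ = μ := hγ.1.1
    · calc γ'.map Prod.snd = W.map Prod.snd + ∑ i, (τ i).map Prod.snd := by
            rw [hγ'def, Measure.map_add _ _ measurable_snd, map_finset_sum measurable_snd]
      _ = W.map Prod.snd + ∑ i, (σ i).map Prod.snd := by rw [hτσsnd]
      _ = (W + ∑ i, σ i).map Prod.snd := by
            rw [Measure.map_add _ _ measurable_snd, map_finset_sum measurable_snd]
      _ = γ.map Prod.snd := by rw [← hsplit]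
      _ = ν := hγ.1.2
  -- cost comparison
  have hcmeas : Measurable fun p : X × Y => ENNReal.ofReal (c p) :=
    hc_cont.measurable.ennreal_ofReal
  have hTCγ : transportCost c γ = transportCost c W + ∑ i, transportCost c (σ i) := by
    conv_lhs => rw [hsplit]
    unfold transportCost
    rw [lintegral_add_measure, lintegral_finset_sum_measure]
  have hTCγ' : transportCost c γ' = transportCost c W + ∑ i, transportCost c (τ i) := by
    unfold transportCost
    rw [hγ'def, lintegral_add_measure, lintegral_finset_sum_measure]
  have hWle : W ≤ γ := by
    rw [hWdef]
    calc γ.withDensity (fun p => 1 - E p) ≤ γ.withDensity 1 := by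
          refine withDensity_mono (Filter.Eventually.of_forall fun p => ?_)
          simp only [Pi.one_apply]
          exact tsub_le_self
    _ = γ := withDensity_one
  have hTCW_fin : transportCost c W ≠ ⊤ := by
    refine ne_top_of_le_ne_top hγfin.ne ?_
    exact lintegral_mono' hWle le_rfl
  have hlowσ : ∀ i, ε * ENNReal.ofReal (c (q i) - δ') ≤ transportCost c (σ i) := by
    intro i
    unfold transportCost
    rw [hσdef]
    simp only [lintegral_smul_measure]
    have h1 : ENNReal.ofReal (c (q i) - δ') * m i ≤ ∫⁻ p in R i, ENNReal.ofReal (c p) ∂γ := by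
      rw [← setLIntegral_const (R i) (ENNReal.ofReal (c (q i) - δ'))]
      refine setLIntegral_mono hcmeas fun p hp => ?_
      exact ENNReal.ofReal_le_ofReal (hlow i p hp)
    calc ε * ENNReal.ofReal (c (q i) - δ')
        = (ε * (m i)⁻¹) * (ENNReal.ofReal (c (q i) - δ') * m i) := by
          rw [mul_comm (ENNReal.ofReal _) (m i), ← mul_assoc, mul_assoc ε _ _,
            ENNReal.inv_mul_cancel (hm0 i).ne' (hmtop i), mul_one]
    _ ≤ (ε * (m i)⁻¹) * ∫⁻ p in R i, ENNReal.ofReal (c p) ∂γ := by gcongr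
  have hupτ : ∀ i, transportCost c (τ i) ≤ ε * ENNReal.ofReal (c ((q (i + 1)).1, (q i).2) + δ') := by
    intro i
    haveI := hAprob (i + 1)
    haveI := hBprob i
    set P : Measure (X × Y) := ((m (i + 1))⁻¹ • A (i + 1)).prod ((m i)⁻¹ • B i) with hPdef
    haveI : IsProbabilityMeasure P := by rw [hPdef]; infer_instance
    have hAnull : ((m (i + 1))⁻¹ • A (i + 1)) (U (i + 1))ᶜ = 0 := by
      rw [Measure.smul_apply, hAdef]
      rw [Measure.map_apply measurable_fst (hUo (i + 1)).measurableSet.compl]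
      have : Prod.fst ⁻¹' (U (i + 1))ᶜ ∩ R (i + 1) = ∅ := by
        ext p
        simp only [Set.mem_inter_iff, Set.mem_preimage, Set.mem_compl_iff, hRdef,
          Set.mem_prod, Set.mem_empty_iff_false, iff_false, not_and]
        tauto
      rw [Measure.restrict_apply (measurable_fst (hUo (i + 1)).measurableSet.compl), this]
      simp
    have hBnull : ((m i)⁻¹ • B i) (V i)ᶜ = 0 := by
      rw [Measure.smul_apply, hBdef]
      rw [Measure.map_apply measurable_snd (hVo i).measurableSet.compl]
      have : Prod.snd ⁻¹' (V i)ᶜ ∩ R i = ∅ := by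
        ext p
        simp only [Set.mem_inter_iff, Set.mem_preimage, Set.mem_compl_iff, hRdef,
          Set.mem_prod, Set.mem_empty_iff_false, iff_false, not_and]
        tauto
      rw [Measure.restrict_apply (measurable_snd (hVo i).measurableSet.compl), this]
      simp
    have hPnull : P (U (i + 1) ×ˢ V i)ᶜ = 0 := by
      rw [Set.compl_prod_eq_union]
      refine measure_union_null ?_ ?_
      · refine le_antisymm ?_ zero_le
        rw [hPdef, Measure.prod_prod]
        rw [hAnull]
        simp
      · refine le_antisymm ?_ zero_le
        rw [hPdef, Measure.prod_prod]
        rw [hBnull]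
        simp
    have hPbound : ∫⁻ p, ENNReal.ofReal (c p) ∂P
        ≤ ENNReal.ofReal (c ((q (i + 1)).1, (q i).2) + δ') := by
      have hms : MeasurableSet (U (i + 1) ×ˢ V i) :=
        ((hUo (i + 1)).prod (hVo i)).measurableSet
      rw [← lintegral_add_compl _ hms (μ := P)]
      rw [setLIntegral_measure_zero _ _ hPnull, add_zero]
      calc ∫⁻ p in U (i + 1) ×ˢ V i, ENNReal.ofReal (c p) ∂P
          ≤ ∫⁻ _ in U (i + 1) ×ˢ V i,
              ENNReal.ofReal (c ((q (i + 1)).1, (q i).2) + δ') ∂P := by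
            refine setLIntegral_mono measurable_const fun p hp => ?_
            refine ENNReal.ofReal_le_ofReal ?_
            have := hup i p.1 hp.1 p.2 hp.2
            rwa [Prod.mk.eta] at this
      _ = ENNReal.ofReal (c ((q (i + 1)).1, (q i).2) + δ') * P (U (i + 1) ×ˢ V i) :=
            setLIntegral_const _ _
      _ ≤ ENNReal.ofReal (c ((q (i + 1)).1, (q i).2) + δ') * 1 := by
            gcongr
            exact prob_le_one
      _ = ENNReal.ofReal (c ((q (i + 1)).1, (q i).2) + δ') := mul_one _
    unfold transportCost
    rw [hτdef]
    simp only [lintegral_smul_measure]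
    rw [← hPdef]
    rw [smul_eq_mul]; gcongr
  -- the strict inequality between the exchanged costs
  have hreal : ∑ i, (c ((q (i + 1)).1, (q i).2) + δ') < ∑ i, (c (q i) - δ') := by
    rw [Finset.sum_add_distrib, Finset.sum_sub_distrib, Finset.sum_const, Finset.card_univ]
    simp only [Fintype.card_fin, nsmul_eq_mul]
    have : (N : ℝ) * δ' = δ / 4 := by
      rw [hδ'def]
      field_simp
    rw [this]
    have hδeq : ∑ i, c (q i) - ∑ i, c ((q (i + 1)).1, (q i).2) = δ := hδdef.symm ▸ rfl
    linarith
  have hsum_up : ∑ i, transportCost c (τ i)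
      ≤ ε * ENNReal.ofReal (∑ i, (c ((q (i + 1)).1, (q i).2) + δ')) := by
    rw [ENNReal.ofReal_sum_of_nonneg fun i _ => by
      have := hc_nonneg ((q (i + 1)).1, (q i).2); linarith]
    rw [Finset.mul_sum]
    exact Finset.sum_le_sum fun i _ => hupτ i
  have hsum_low : ε * ENNReal.ofReal (∑ i, (c (q i) - δ'))
      ≤ ∑ i, transportCost c (σ i) := by
    calc ε * ENNReal.ofReal (∑ i, (c (q i) - δ'))
        ≤ ε * ∑ i, ENNReal.ofReal (c (q i) - δ') := by
          gcongr
          exact ofReal_sum_le _ _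
    _ = ∑ i, ε * ENNReal.ofReal (c (q i) - δ') := Finset.mul_sum _ _ _
    _ ≤ ∑ i, transportCost c (σ i) := Finset.sum_le_sum fun i _ => hlowσ i
  have hofreal_lt : ENNReal.ofReal (∑ i, (c ((q (i + 1)).1, (q i).2) + δ'))
      < ENNReal.ofReal (∑ i, (c (q i) - δ')) := by
    refine ENNReal.ofReal_lt_ofReal_iff ?_ |>.mpr hreal
    have h0 : (0:ℝ) ≤ ∑ i, (c ((q (i + 1)).1, (q i).2) + δ') := by
      apply Finset.sum_nonneg
      intro i _
      have := hc_nonneg ((q (i + 1)).1, (q i).2)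
      linarith
    linarith
  have hstrict : transportCost c γ' < transportCost c γ := by
    rw [hTCγ, hTCγ']
    have h1 : ∑ i, transportCost c (τ i) < ∑ i, transportCost c (σ i) := by
      calc ∑ i, transportCost c (τ i)
          ≤ ε * ENNReal.ofReal (∑ i, (c ((q (i + 1)).1, (q i).2) + δ')) := hsum_up
      _ < ε * ENNReal.ofReal (∑ i, (c (q i) - δ')) := by
          exact ENNReal.mul_lt_mul_right hε0 hεtop hofreal_lt
      _ ≤ ∑ i, transportCost c (σ i) := hsum_low
    exact ENNReal.add_lt_add_left hTCW_fin h1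
  exact absurd (hγ.2 γ' hcoupling) (not_le.mpr hstrict)

end CMono


/-! ### Step 2: Rockafellar-type potentials from chains in a cyclically monotone set -/

section Potentials

variable {X Y : Type*} [TopologicalSpace X] [TopologicalSpace Y]

/-- The value of a chain of intermediate transfers ending at `x`. -/
def chainVal (c : X × Y → ℝ) (qc : ℕ → X × Y) (n : ℕ) (x : X) : ℝ :=
  (∑ i ∈ Finset.range n, (c ((qc (i + 1)).1, (qc i).2) - c (qc i)))
    + (c (x, (qc n).2) - c (qc n))

/-- Chains in `Γ` starting at `p₀`. -/
def ChainT {X Y : Type*} (Γ : Set (X × Y)) (p₀ : X × Y) : Type _ :=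
  {s : ℕ × (ℕ → X × Y) // s.2 0 = p₀ ∧ ∀ i ≤ s.1, s.2 i ∈ Γ}

/-- The Rockafellar potential. -/
def phi (c : X × Y → ℝ) (Γ : Set (X × Y)) (p₀ : X × Y) (x : X) : EReal :=
  ⨅ s : ChainT Γ p₀, ((chainVal c s.1.2 s.1.1 x : ℝ) : EReal)

variable (c : X × Y → ℝ) (Γ : Set (X × Y)) (p₀ : X × Y)

lemma phi_le_chain (x : X) (s : ChainT Γ p₀) :
    phi c Γ p₀ x ≤ ((chainVal c s.1.2 s.1.1 x : ℝ) : EReal) := iInf_le _ s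

lemma phi_le_base (hp₀ : p₀ ∈ Γ) (x : X) :
    phi c Γ p₀ x ≤ ((c (x, p₀.2) - c p₀ : ℝ) : EReal) := by
  have h := phi_le_chain c Γ p₀ x ⟨(0, fun _ => p₀), rfl, fun i _ => hp₀⟩
  simpa [chainVal] using h

lemma phi_ne_top (hp₀ : p₀ ∈ Γ) (x : X) : phi c Γ p₀ x ≠ ⊤ :=
  ((phi_le_base c Γ p₀ hp₀ x).trans_lt (EReal.coe_lt_top _)).ne

lemma chainVal_extend (qc : ℕ → X × Y) (n : ℕ) (z : X × Y) (x : X) :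
    chainVal c (fun i => if i ≤ n then qc i else z) (n + 1) x
      = chainVal c qc n z.1 + (c (x, z.2) - c z) := by
  unfold chainVal
  rw [Finset.sum_range_succ]
  have h1 : ∀ i ∈ Finset.range n,
      (c (((fun i => if i ≤ n then qc i else z) (i + 1)).1,
          ((fun i => if i ≤ n then qc i else z) i).2)
        - c ((fun i => if i ≤ n then qc i else z) i))
      = (c ((qc (i + 1)).1, (qc i).2) - c (qc i)) := by
    intro i hi
    have hi' : i < n := Finset.mem_range.mp hi
    have e1 : (if i + 1 ≤ n then qc (i + 1) else z) = qc (i + 1) := if_pos (by omega)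
    have e2 : (if i ≤ n then qc i else z) = qc i := if_pos (by omega)
    simp only [e1, e2]
  rw [Finset.sum_congr rfl h1]
  have e3 : (if n + 1 ≤ n then qc (n + 1) else z) = z := if_neg (by omega)
  have e4 : (if n ≤ n then qc n else z) = qc n := if_pos le_rfl
  simp only [e3, e4]

lemma phi_step (hp₀ : p₀ ∈ Γ) {xb : X} {yb : Y} (hz : (xb, yb) ∈ Γ)
    (hbot : phi c Γ p₀ xb ≠ ⊥) (x : X) :
    phi c Γ p₀ x ≤ (((phi c Γ p₀ xb).toReal + (c (x, yb) - c (xb, yb)) : ℝ) : EReal) := by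
  refine Stmt0Aux.ereal_le_coe_of_forall fun ε hε => ?_
  have hlt : phi c Γ p₀ xb < (((phi c Γ p₀ xb).toReal + ε : ℝ) : EReal) := by
    conv_lhs => rw [← EReal.coe_toReal (phi_ne_top c Γ p₀ hp₀ xb) hbot]
    exact EReal.coe_lt_coe_iff.mpr (by linarith)
  obtain ⟨⟨⟨n, qc⟩, hq0, hqΓ⟩, hs⟩ := iInf_lt_iff.mp hlt
  rw [EReal.coe_lt_coe_iff] at hs
  have hmem0 : (fun i => if i ≤ n then qc i else (xb, yb)) 0 = p₀ := by
    simp only [Nat.zero_le, if_pos]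
    exact hq0
  have hmem : ∀ i ≤ n + 1, (fun i => if i ≤ n then qc i else (xb, yb)) i ∈ Γ := by
    intro i hi
    by_cases h : i ≤ n
    · simp only [if_pos h]
      exact hqΓ i h
    · simp only [if_neg h]
      exact hz
  have h2 := phi_le_chain c Γ p₀ x
    ⟨(n + 1, fun i => if i ≤ n then qc i else (xb, yb)), hmem0, hmem⟩
  have h3 : chainVal c (fun i => if i ≤ n then qc i else (xb, yb)) (n + 1) x
      = chainVal c qc n xb + (c (x, yb) - c (xb, yb)) := by
    have := chainVal_extend c qc n (xb, yb) x
    simpa using this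
  rw [h3] at h2
  refine h2.trans ?_
  rw [EReal.coe_le_coe_iff]
  linarith

lemma phi_lower
    (hmono : ∀ (N : ℕ) [NeZero N], ∀ qq : Fin N → X × Y, (∀ i, qq i ∈ Γ) →
      ∑ i, c (qq i) ≤ ∑ i, c ((qq (i + 1)).1, (qq i).2))
    (hp₀ : p₀ ∈ Γ) {x : X} {y' : Y} (hxy : (x, y') ∈ Γ) :
    ((c (x, y') - c (p₀.1, y') : ℝ) : EReal) ≤ phi c Γ p₀ x := by
  refine le_iInf fun s => ?_
  obtain ⟨⟨n, qc⟩, hq0, hqΓ⟩ := s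
  rw [EReal.coe_le_coe_iff]
  set Qn : ℕ → X × Y := fun i => if i ≤ n then qc i else (x, y') with hQn
  haveI : NeZero (n + 2) := ⟨Nat.succ_ne_zero _⟩
  have hmem : ∀ i : Fin (n + 2), Qn i.val ∈ Γ := by
    intro i
    by_cases hle : (i : ℕ) ≤ n
    · rw [hQn]
      simp only [if_pos hle]
      exact hqΓ i hle
    · rw [hQn]
      simp only [if_neg hle]
      exact hxy
  have h := hmono (n + 2) (fun i : Fin (n + 2) => Qn i.val) hmem
  beta_reduce at h
  have hL : (∑ i : Fin (n + 2), c (Qn i.val)) = ∑ i ∈ Finset.range (n + 2), c (Qn i) :=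
    Fin.sum_univ_eq_sum_range (fun i => c (Qn i)) (n + 2)
  have hR : (∑ i : Fin (n + 2), c ((Qn ((i + 1 : Fin (n + 2)) : ℕ)).1, (Qn i.val).2))
      = ∑ i ∈ Finset.range (n + 2), c ((Qn ((i + 1) % (n + 2))).1, (Qn i).2) := by
    rw [← Fin.sum_univ_eq_sum_range
      (fun i => c ((Qn ((i + 1) % (n + 2))).1, (Qn i).2)) (n + 2)]
    refine Finset.sum_congr rfl fun i _ => ?_
    have hval : ((i + 1 : Fin (n + 2)) : ℕ) = ((i : ℕ) + 1) % (n + 2) := by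
      simp [Fin.val_add, Fin.val_one]
    rw [hval]
  rw [hL, hR] at h
  -- compute the two range sums
  have e1 : ∑ i ∈ Finset.range (n + 2), c (Qn i)
      = (∑ i ∈ Finset.range (n + 1), c (qc i)) + c (x, y') := by
    rw [Finset.sum_range_succ]
    congr 1
    · refine Finset.sum_congr rfl fun i hi => ?_
      have : i ≤ n := by
        have := Finset.mem_range.mp hi
        omega
      rw [hQn]
      simp only [if_pos this]
    · rw [hQn]
      simp only [if_neg (by omega : ¬ n + 1 ≤ n)]
  have e2 : ∑ i ∈ Finset.range (n + 2), c ((Qn ((i + 1) % (n + 2))).1, (Qn i).2)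
      = (∑ i ∈ Finset.range n, c ((qc (i + 1)).1, (qc i).2))
        + c (x, (qc n).2) + c (p₀.1, y') := by
    rw [Finset.sum_range_succ, Finset.sum_range_succ]
    congr 1
    · congr 1
      · refine Finset.sum_congr rfl fun i hi => ?_
        have hi' : i < n := Finset.mem_range.mp hi
        have h1 : (i + 1) % (n + 2) = i + 1 := Nat.mod_eq_of_lt (by omega)
        rw [h1, hQn]
        simp only [if_pos (by omega : i + 1 ≤ n), if_pos (by omega : i ≤ n)]
      · have h1 : (n + 1) % (n + 2) = n + 1 := Nat.mod_eq_of_lt (by omega)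
        rw [h1, hQn]
        simp only [if_neg (by omega : ¬ n + 1 ≤ n), if_pos (le_refl n)]
    · have h1 : (n + 1 + 1) % (n + 2) = 0 := by
        have : n + 1 + 1 = n + 2 := by omega
        rw [this, Nat.mod_self]
      rw [h1, hQn]
      simp only [if_pos (Nat.zero_le n), if_neg (by omega : ¬ n + 1 ≤ n)]
      have hq0' : qc 0 = p₀ := hq0
      rw [hq0']
  rw [e1, e2] at h
  -- conclude
  unfold chainVal
  rw [Finset.sum_sub_distrib]
  have e3 : ∑ i ∈ Finset.range (n + 1), c (qc i)
      = (∑ i ∈ Finset.range n, c (qc i)) + c (qc n) := Finset.sum_range_succ _ _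
  rw [e3] at h
  linarith

/-- The conjugate potential. -/
def psi (y : Y) : EReal :=
  ⨅ x : {x : X // phi c Γ p₀ x ≠ ⊥},
    ((c (x.1, y) - (phi c Γ p₀ x.1).toReal : ℝ) : EReal)

lemma psi_le {x : X} (hx : phi c Γ p₀ x ≠ ⊥) (y : Y) :
    psi c Γ p₀ y ≤ ((c (x, y) - (phi c Γ p₀ x).toReal : ℝ) : EReal) := by
  unfold psi
  exact iInf_le (fun x : {x : X // phi c Γ p₀ x ≠ ⊥} =>
    ((c (x.1, y) - (phi c Γ p₀ x.1).toReal : ℝ) : EReal)) ⟨x, hx⟩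

lemma psi_ge (hp₀ : p₀ ∈ Γ) {xb : X} {yb : Y} (hz : (xb, yb) ∈ Γ)
    (hbot : phi c Γ p₀ xb ≠ ⊥) :
    ((c (xb, yb) - (phi c Γ p₀ xb).toReal : ℝ) : EReal) ≤ psi c Γ p₀ yb := by
  refine le_iInf fun x => ?_
  rw [EReal.coe_le_coe_iff]
  have h := phi_step c Γ p₀ hp₀ hz hbot x.1
  have h2 := EReal.toReal_le_toReal h x.2 (EReal.coe_ne_top _)
  rw [EReal.toReal_coe] at h2
  linarith

variable [MeasurableSpace X] [BorelSpace X] [MeasurableSpace Y] [BorelSpace Y]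

lemma phi_meas (hc : Continuous c) : Measurable (phi c Γ p₀) := by
  apply measurable_of_Iio
  intro a
  have heq : (phi c Γ p₀) ⁻¹' (Set.Iio a)
      = ⋃ s : ChainT Γ p₀, {x | ((chainVal c s.1.2 s.1.1 x : ℝ) : EReal) < a} := by
    ext x
    simp only [Set.mem_preimage, Set.mem_Iio, Set.mem_iUnion, Set.mem_setOf_eq, phi,
      iInf_lt_iff]
  rw [heq]
  refine (isOpen_iUnion fun s => ?_).measurableSet
  have hcont : Continuous fun x => ((chainVal c s.1.2 s.1.1 x : ℝ) : EReal) := by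
    apply continuous_coe_real_ereal.comp
    unfold chainVal
    exact continuous_const.add
      ((hc.comp (continuous_id.prodMk continuous_const)).sub continuous_const)
  exact IsOpen.preimage hcont isOpen_Iio

lemma psi_meas (hc : Continuous c) : Measurable (psi c Γ p₀) := by
  apply measurable_of_Iio
  intro a
  have heq : (psi c Γ p₀) ⁻¹' (Set.Iio a)
      = ⋃ x : {x : X // phi c Γ p₀ x ≠ ⊥},
          {y | ((c (x.1, y) - (phi c Γ p₀ x.1).toReal : ℝ) : EReal) < a} := by
    ext y
    simp only [Set.mem_preimage, Set.mem_Iio, Set.mem_iUnion, Set.mem_setOf_eq, psi,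
      iInf_lt_iff]
  rw [heq]
  refine (isOpen_iUnion fun x => ?_).measurableSet
  have hcont : Continuous fun y => ((c (x.1, y) - (phi c Γ p₀ x.1).toReal : ℝ) : EReal) := by
    apply continuous_coe_real_ereal.comp
    exact (hc.comp (continuous_const.prodMk continuous_id)).sub continuous_const
  exact IsOpen.preimage hcont isOpen_Iio

end Potentials

end Stmt0Aux

theorem stmt0 {X Y : Type*}
    [MeasurableSpace X] [TopologicalSpace X] [PolishSpace X] [BorelSpace X]
    [MeasurableSpace Y] [TopologicalSpace Y] [PolishSpace Y] [BorelSpace Y]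
    (c : X × Y → ℝ) (hc_cont : Continuous c) (hc_nonneg : ∀ p, 0 ≤ c p)
    (μ : Measure X) (ν : Measure Y) [IsProbabilityMeasure μ] [IsProbabilityMeasure ν]
    (γ : Measure (X × Y)) (hγ : IsOptimalCoupling c γ μ ν)
    (hγfin : transportCost c γ < ⊤)
    (ω : Measure (X × Y)) [IsProbabilityMeasure ω]
    (hac : ω ≪ γ) (hωfin : transportCost c ω < ⊤) :
    IsOptimalCoupling c ω (ω.map Prod.fst) (ω.map Prod.snd) := by
  classical
  refine ⟨⟨rfl, rfl⟩, ?_⟩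
  intro pp hpp
  rcases eq_or_ne (transportCost c pp) ⊤ with htop | htop
  · rw [htop]; exact le_top
  haveI hγp : IsProbabilityMeasure γ := Stmt0Aux.coupling_prob hγ.1
  haveI hη : IsProbabilityMeasure (ω.map Prod.fst) :=
    Measure.isProbabilityMeasure_map measurable_fst.aemeasurable
  haveI hζ : IsProbabilityMeasure (ω.map Prod.snd) :=
    Measure.isProbabilityMeasure_map measurable_snd.aemeasurable
  haveI hppp : IsProbabilityMeasure pp := Stmt0Aux.coupling_prob hpp
  -- integrability from finite transport cost
  have hIntc : ∀ ρ : Measure (X × Y), transportCost c ρ ≠ ⊤ → Integrable c ρ := by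
    intro ρ h
    refine ⟨hc_cont.aestronglyMeasurable, ?_⟩
    rw [hasFiniteIntegral_iff_ofReal (Filter.Eventually.of_forall hc_nonneg)]
    exact lt_top_iff_ne_top.mpr h
  have hIntcω : Integrable c ω := hIntc ω hωfin.ne
  have hIntcpp : Integrable c pp := hIntc pp htop
  -- the support of γ
  set Γ : Set (X × Y) := Stmt0Aux.msupp γ with hΓdef
  have hΓnull : γ Γᶜ = 0 := Stmt0Aux.msupp_compl_null γ
  have hωΓ : ω Γᶜ = 0 := hac hΓnull
  have hΓne : Γ.Nonempty := by
    rcases Set.eq_empty_or_nonempty Γ with h | h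
    · exfalso
      rw [h, Set.compl_empty] at hωΓ
      rw [measure_univ] at hωΓ
      exact one_ne_zero hωΓ
    · exact h
  obtain ⟨p₀, hp₀⟩ := hΓne
  have hmono : ∀ (N : ℕ) [NeZero N], ∀ qq : Fin N → X × Y, (∀ i, qq i ∈ Γ) →
      ∑ i, c (qq i) ≤ ∑ i, c ((qq (i + 1)).1, (qq i).2) := by
    intro N hinst qq hqq
    haveI := hinst
    exact Stmt0Aux.optimal_support_cmono c hc_cont hc_nonneg μ ν γ hγ hγfin N qq hqq
  -- the potentials
  set φ : X → EReal := Stmt0Aux.phi c Γ p₀ with hφdef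
  set ψ : Y → EReal := Stmt0Aux.psi c Γ p₀ with hψdef
  have hφmeas : Measurable φ := Stmt0Aux.phi_meas c Γ p₀ hc_cont
  have hψmeas : Measurable ψ := Stmt0Aux.psi_meas c Γ p₀ hc_cont
  have hmemS : ∀ p : X × Y, p ∈ Γ → φ p.1 ≠ ⊥ := by
    intro p hp
    have h := Stmt0Aux.phi_lower c Γ p₀ hmono hp₀ (x := p.1) (y' := p.2)
      (by rwa [Prod.mk.eta])
    exact ((EReal.bot_lt_coe _).trans_le h).ne'
  have hmemSY : ∀ p : X × Y, p ∈ Γ → ψ p.2 ≠ ⊥ := by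
    intro p hp
    have h := Stmt0Aux.psi_ge c Γ p₀ hp₀ (xb := p.1) (yb := p.2)
      (by rwa [Prod.mk.eta]) (hmemS p hp)
    exact ((EReal.bot_lt_coe _).trans_le h).ne'
  set A : X → ℝ := fun x => (φ x).toReal with hA
  set B : Y → ℝ := fun y => (ψ y).toReal with hB
  have hsum_le : ∀ (x : X) (y : Y), φ x ≠ ⊥ → ψ y ≠ ⊥ → A x + B y ≤ c (x, y) := by
    intro x y hx hy
    have h1 := Stmt0Aux.psi_le c Γ p₀ hx y
    have h2 := EReal.toReal_le_toReal h1 hy (EReal.coe_ne_top _)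
    rw [EReal.toReal_coe] at h2
    have hAx : A x = (φ x).toReal := rfl
    have hBy : B y = (ψ y).toReal := rfl
    rw [hAx, hBy]
    linarith
  have hsum_eq : ∀ p : X × Y, p ∈ Γ → A p.1 + B p.2 = c p := by
    intro p hp
    have hx := hmemS p hp
    have h1 := Stmt0Aux.psi_le c Γ p₀ hx p.2
    have h2 := Stmt0Aux.psi_ge c Γ p₀ hp₀ (xb := p.1) (yb := p.2)
      (by rwa [Prod.mk.eta]) hx
    have h3 : ψ p.2 = ((c (p.1, p.2) - (φ p.1).toReal : ℝ) : EReal) := le_antisymm h1 h2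
    have hBp : B p.2 = c (p.1, p.2) - (φ p.1).toReal := by
      have hb0 : B p.2 = (ψ p.2).toReal := rfl
      rw [hb0, h3, EReal.toReal_coe]
    have hAp : A p.1 = (φ p.1).toReal := rfl
    rw [hAp, hBp, Prod.mk.eta]
    ring
  -- null complements of the good sets, for any coupling with the same marginals
  have hSc_null : ∀ ρ : Measure (X × Y), ρ.map Prod.fst = ω.map Prod.fst →
      ρ {p : X × Y | φ p.1 = ⊥} = 0 := by
    intro ρ hρ
    have hms : MeasurableSet {x : X | φ x = ⊥} := hφmeas (measurableSet_singleton ⊥)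
    have h2 : ρ {p : X × Y | φ p.1 = ⊥} = (ρ.map Prod.fst) {x | φ x = ⊥} := by
      rw [Measure.map_apply measurable_fst hms]; rfl
    rw [h2, hρ, Measure.map_apply measurable_fst hms]
    refine measure_mono_null ?_ hωΓ
    intro p hp
    simp only [Set.mem_compl_iff]
    intro hpΓ
    exact (hmemS p hpΓ) hp
  have hSYc_null : ∀ ρ : Measure (X × Y), ρ.map Prod.snd = ω.map Prod.snd →
      ρ {p : X × Y | ψ p.2 = ⊥} = 0 := by
    intro ρ hρ
    have hms : MeasurableSet {y : Y | ψ y = ⊥} := hψmeas (measurableSet_singleton ⊥)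
    have h2 : ρ {p : X × Y | ψ p.2 = ⊥} = (ρ.map Prod.snd) {y | ψ y = ⊥} := by
      rw [Measure.map_apply measurable_snd hms]; rfl
    rw [h2, hρ, Measure.map_apply measurable_snd hms]
    refine measure_mono_null ?_ hωΓ
    intro p hp
    simp only [Set.mem_compl_iff]
    intro hpΓ
    exact (hmemSY p hpΓ) hp
  -- the truncated potentials
  set F : ℕ → X → ℝ := fun n x => Stmt0Aux.clamp n (A x) with hF
  set G : ℕ → Y → ℝ := fun n y => Stmt0Aux.clamp n (B y) with hG
  have hAmeas : Measurable A := hφmeas.ereal_toReal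
  have hBmeas : Measurable B := hψmeas.ereal_toReal
  have hFmeas : ∀ n, Measurable (F n) := by
    intro n
    have : F n = fun x => max (-(n : ℝ)) (min (n : ℝ) (A x)) := rfl
    rw [this]
    exact measurable_const.max (measurable_const.min hAmeas)
  have hGmeas : ∀ n, Measurable (G n) := by
    intro n
    have : G n = fun y => max (-(n : ℝ)) (min (n : ℝ) (B y)) := rfl
    rw [this]
    exact measurable_const.max (measurable_const.min hBmeas)
  have hFbd : ∀ n x, |F n x| ≤ n := fun n x =>
    abs_le.mpr ⟨Stmt0Aux.neg_le_clamp _ _, Stmt0Aux.clamp_le _ _ (Nat.cast_nonneg n)⟩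
  have hGbd : ∀ n y, |G n y| ≤ n := fun n y =>
    abs_le.mpr ⟨Stmt0Aux.neg_le_clamp _ _, Stmt0Aux.clamp_le _ _ (Nat.cast_nonneg n)⟩
  set f : ℕ → X × Y → ℝ := fun n p => F n p.1 + G n p.2 with hf
  have hfmeas : ∀ n, Measurable (f n) := fun n =>
    ((hFmeas n).comp measurable_fst).add ((hGmeas n).comp measurable_snd)
  have hfint : ∀ (n : ℕ) (ρ : Measure (X × Y)), IsProbabilityMeasure ρ →
      Integrable (f n) ρ := by
    intro n ρ hρ
    refine ⟨(hfmeas n).aestronglyMeasurable, ?_⟩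
    refine HasFiniteIntegral.of_bounded (C := (n : ℝ) + n)
      (Filter.Eventually.of_forall fun p => ?_)
    rw [Real.norm_eq_abs]
    calc |f n p| ≤ |F n p.1| + |G n p.2| := abs_add_le _ _
    _ ≤ (n : ℝ) + n := add_le_add (hFbd n p.1) (hGbd n p.2)
  -- the marginal identity
  have hmarg : ∀ (n : ℕ) (ρ : Measure (X × Y)), IsProbabilityMeasure ρ →
      ρ.map Prod.fst = ω.map Prod.fst → ρ.map Prod.snd = ω.map Prod.snd →
      ∫ p, f n p ∂ρ
        = (∫ x, F n x ∂(ω.map Prod.fst)) + ∫ y, G n y ∂(ω.map Prod.snd) := by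
    intro n ρ hρ h1 h2
    haveI := hρ
    have hi1 : Integrable (fun p : X × Y => F n p.1) ρ := by
      refine ⟨((hFmeas n).comp measurable_fst).aestronglyMeasurable, ?_⟩
      exact HasFiniteIntegral.of_bounded (C := (n : ℝ))
        (Filter.Eventually.of_forall fun p => by rw [Real.norm_eq_abs]; exact hFbd n p.1)
    have hi2 : Integrable (fun p : X × Y => G n p.2) ρ := by
      refine ⟨((hGmeas n).comp measurable_snd).aestronglyMeasurable, ?_⟩
      exact HasFiniteIntegral.of_bounded (C := (n : ℝ))
        (Filter.Eventually.of_forall fun p => by rw [Real.norm_eq_abs]; exact hGbd n p.2)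
    have hsum : ∫ p, f n p ∂ρ
        = (∫ p, F n p.1 ∂ρ) + ∫ p, G n p.2 ∂ρ := integral_add hi1 hi2
    rw [hsum]
    congr 1
    · rw [← h1, integral_map measurable_fst.aemeasurable (hFmeas n).aestronglyMeasurable]
    · rw [← h2, integral_map measurable_snd.aemeasurable (hGmeas n).aestronglyMeasurable]
  -- pointwise inequality pp-a.e.
  have hae_le : ∀ n : ℕ, ∀ᵐ p ∂pp, f n p ≤ c p := by
    intro n
    have hnull : pp ({p : X × Y | φ p.1 = ⊥} ∪ {p : X × Y | ψ p.2 = ⊥}) = 0 :=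
      measure_union_null (hSc_null pp hpp.1) (hSYc_null pp hpp.2)
    rw [ae_iff]
    refine measure_mono_null ?_ hnull
    intro p hp
    simp only [Set.mem_setOf_eq, not_le] at hp
    by_contra hmem
    simp only [Set.mem_union, Set.mem_setOf_eq, not_or] at hmem
    have hle : A p.1 + B p.2 ≤ c p := by
      have := hsum_le p.1 p.2 hmem.1 hmem.2
      rwa [Prod.mk.eta] at this
    have h1 : f n p ≤ c p :=
      Stmt0Aux.clamp_add_le (Nat.cast_nonneg n) hle (hc_nonneg p)
    exact absurd h1 (not_le.mpr hp)
  have hae_eq : ∀ᵐ p ∂ω, p ∈ Γ := by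
    rw [ae_iff]
    exact hωΓ
  -- domination and a.e. convergence for ω
  have hbound : ∀ n : ℕ, ∀ᵐ p ∂ω, ‖f n p‖ ≤ c p := by
    intro n
    filter_upwards [hae_eq] with p hp
    have heq := hsum_eq p hp
    have h1 : f n p ≤ c p :=
      Stmt0Aux.clamp_add_le (Nat.cast_nonneg n) (le_of_eq heq) (hc_nonneg p)
    have h2 : 0 ≤ f n p :=
      Stmt0Aux.clamp_add_nonneg (Nat.cast_nonneg n) heq (hc_nonneg p)
    rw [Real.norm_eq_abs, abs_le]
    exact ⟨by linarith [hc_nonneg p], h1⟩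
  have hlim : ∀ᵐ p ∂ω, Filter.Tendsto (fun n => f n p) Filter.atTop (nhds (c p)) := by
    filter_upwards [hae_eq] with p hp
    have heq := hsum_eq p hp
    refine tendsto_atTop_of_eventually_const (i₀ := ⌈max |A p.1| |B p.2|⌉₊) ?_
    intro n hn
    have hcast : max |A p.1| |B p.2| ≤ (n : ℝ) :=
      le_trans (Nat.le_ceil _) (Nat.cast_le.mpr hn)
    have hAbd : |A p.1| ≤ (n : ℝ) := le_trans (le_max_left _ _) hcast
    have hBbd : |B p.2| ≤ (n : ℝ) := le_trans (le_max_right _ _) hcast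
    have e1 : F n p.1 = A p.1 :=
      Stmt0Aux.clamp_eq_self (neg_le_of_abs_le hAbd) (le_of_abs_le hAbd)
    have e2 : G n p.2 = B p.2 :=
      Stmt0Aux.clamp_eq_self (neg_le_of_abs_le hBbd) (le_of_abs_le hBbd)
    show f n p = c p
    rw [hf]
    simp only []
    rw [e1, e2]
    exact heq
  have hconv : Filter.Tendsto (fun n => ∫ p, f n p ∂ω) Filter.atTop
      (nhds (∫ p, c p ∂ω)) :=
    tendsto_integral_of_dominated_convergence c
      (fun n => (hfmeas n).aestronglyMeasurable) hIntcω hbound hlim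
  -- conclusion
  have hstep : ∀ n : ℕ, ∫ p, f n p ∂ω ≤ ∫ p, c p ∂pp := by
    intro n
    have h1 : ∫ p, f n p ∂ω = ∫ p, f n p ∂pp := by
      rw [hmarg n ω inferInstance rfl rfl, hmarg n pp hppp hpp.1 hpp.2]
    rw [h1]
    exact integral_mono_ae (hfint n pp hppp) hIntcpp (hae_le n)
  have hfinal : ∫ p, c p ∂ω ≤ ∫ p, c p ∂pp :=
    le_of_tendsto hconv (Filter.Eventually.of_forall hstep)
  have e1 : transportCost c ω = ENNReal.ofReal (∫ p, c p ∂ω) :=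
    (ofReal_integral_eq_lintegral_ofReal hIntcω
      (Filter.Eventually.of_forall hc_nonneg)).symm
  have e2 : transportCost c pp = ENNReal.ofReal (∫ p, c p ∂pp) :=
    (ofReal_integral_eq_lintegral_ofReal hIntcpp
      (Filter.Eventually.of_forall hc_nonneg)).symm
  rw [e1, e2]
  exact ENNReal.ofReal_le_ofReal hfinal
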